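/- Suppose that for every k there is a constant c_k > 0 such that any finite group G covered by k sets contains a set A in the cover with at least c_k|G|² quadruples (x,y,xy,yx) ∈ A⁴. Then for any sequence (G_n) of finite non-Abelian groups with c(G_n) → 0, the non-commuting Schur numbers satisfy k(G_n) → ∞. -/

import Mathlib

/-- `SchurProperty G k` : every cover of `G` by `k` sets contains a set with a
monochromatic quadruple `(x, y, xy, yx)` with `xy ≠ yx`. -/
def SchurProperty (G : Type*) [Group G] (k : ℕ) : Prop :=
  ∀ C : Fin k → Set G, (⋃ i, C i) = Set.univ →
    ∃ i, ∃ x y : G, x ∈ C i ∧ y ∈ C i ∧ x * y ∈ C i ∧ y * x ∈ C i ∧ x * y ≠ y * x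

/-- The non-commuting Schur number `k(G)`. -/
noncomputable def nonCommutingSchurNumber (G : Type*) [Group G] : ℕ :=
  sSup {k : ℕ | SchurProperty G k}

lemma schur_bdd (G : Type*) [Group G] [Fintype G] :
    BddAbove {k : ℕ | SchurProperty G k} := by
  refine ⟨Fintype.card G, fun k hk => ?_⟩
  by_contra hlt
  push_neg at hlt
  have hcard : Fintype.card G ≤ Fintype.card (Fin k) := by simpa using hlt.le
  obtain ⟨f⟩ := Function.Embedding.nonempty_of_card_le hcard
  obtain ⟨i, x, y, hx, hy, _, _, hne⟩ := hk (fun i => (f : G → Fin k) ⁻¹' {i}) (by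
    ext g; simp)
  exact hne (by rw [f.injective (hx.trans hy.symm)])

theorem schur_numbers_tendsto_atTop
    (hmain : ∃ c : ℕ → ℝ, (∀ k, 0 < c k) ∧
      ∀ (k : ℕ) (G : Type) [Group G] [Fintype G] (C : Fin k → Set G),
        (⋃ i, C i) = Set.univ →
          ∃ i, c k * (Fintype.card G : ℝ) ^ 2 ≤
            (Nat.card {p : G × G //
              p.1 ∈ C i ∧ p.2 ∈ C i ∧ p.1 * p.2 ∈ C i ∧ p.2 * p.1 ∈ C i} : ℝ))
    (G : ℕ → Type) [∀ n, Group (G n)] [∀ n, Fintype (G n)]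
    (hna : ∀ n, ¬ ∀ x y : G n, x * y = y * x)
    (hc : Filter.Tendsto (fun n => ((commProb (G n) : ℝ))) Filter.atTop (nhds 0)) :
    Filter.Tendsto (fun n => nonCommutingSchurNumber (G n)) Filter.atTop Filter.atTop := by
  obtain ⟨c, hcpos, hmain⟩ := hmain
  rw [Filter.tendsto_atTop]
  intro N
  have hev : ∀ᶠ n in Filter.atTop, (commProb (G n) : ℝ) < c N := by
    have := hc.eventually (eventually_lt_nhds (hcpos N))
    exact this
  filter_upwards [hev] with n hn
  -- show SchurProperty (G n) N holds
  have hSchur : SchurProperty (G n) N := by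
    intro C hC
    obtain ⟨i, hi⟩ := hmain N (G n) C hC
    refine ⟨i, ?_⟩
    by_contra hcon
    push_neg at hcon
    -- every pair in the quadruple set commutes
    have hinj : Nat.card {p : G n × G n //
        p.1 ∈ C i ∧ p.2 ∈ C i ∧ p.1 * p.2 ∈ C i ∧ p.2 * p.1 ∈ C i} ≤
        Nat.card {p : G n × G n // Commute p.1 p.2} := by
      apply Nat.card_le_card_of_injective
        (f := fun p => ⟨p.1, hcon p.1.1 p.1.2 p.2.1 p.2.2.1 p.2.2.2.1 p.2.2.2.2⟩)
      intro a b hab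
      exact Subtype.ext (by simpa [Subtype.ext_iff] using hab)
    have hcomm : (Nat.card {p : G n × G n // Commute p.1 p.2} : ℝ)
        = (commProb (G n) : ℝ) * (Fintype.card (G n) : ℝ) ^ 2 := by
      have hcard : (Nat.card (G n) : ℝ) = (Fintype.card (G n) : ℝ) := by
        rw [Nat.card_eq_fintype_card]
      rw [commProb_def]
      push_cast
      rw [hcard, div_mul_cancel₀]
      positivity
    have hpos : (0:ℝ) < (Fintype.card (G n) : ℝ) ^ 2 := by positivity
    have h1 : c N * (Fintype.card (G n) : ℝ) ^ 2
        ≤ (commProb (G n) : ℝ) * (Fintype.card (G n) : ℝ) ^ 2 := by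
      calc c N * (Fintype.card (G n) : ℝ) ^ 2
          ≤ (Nat.card {p : G n × G n //
              p.1 ∈ C i ∧ p.2 ∈ C i ∧ p.1 * p.2 ∈ C i ∧ p.2 * p.1 ∈ C i} : ℝ) := hi
        _ ≤ (Nat.card {p : G n × G n // Commute p.1 p.2} : ℝ) := by exact_mod_cast hinj
        _ = _ := hcomm
    have := (mul_le_mul_iff_of_pos_right hpos).mp h1
    linarith
  have hmem : N ∈ {k : ℕ | SchurProperty (G n) k} := hSchur
  exact le_csSup (schur_bdd (G n)) hmem
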